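/- Let M be a finite set and P_t the semigroup of an irreducible aperiodic continuous-time Markov chain on M with invariant probability m. Let (φ_{s,t})_{s≤t} be the associated coalescing stochastic flow (n-point motion: n independent copies of the chain coalescing upon meeting). Define τ = inf{t > 0 : φ_{−t,0}(x) = φ_{−t,0}(y) for all x,y ∈ M}. Then τ < ∞ almost surely, the value X_τ = φ_{−τ,0}(x) does not depend on x, and the law of X_τ is exactly the invariant measure m. -/

import Mathlib

open MeasureTheory ProbabilityTheory Filter Topology

/-- Propp–Wilson / coupling-from-the-past: for the coalescing stochastic flow `φ`
associated with an irreducible aperiodic Markov chain on a finite state space `M`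
(stationary flow with a.s. cocycle property, pairwise coalescence in finite time,
whose one-point motion converges in law to the invariant probability `m`), the backward
coalescence time `τ = inf{t > 0 : φ_{−t,0} is constant}` is a.s. finite, the common value
`X = φ_{−τ,0}(x)` does not depend on `x`, and the law of `X` is exactly `m`. -/
theorem stmt12 {M : Type*} [Fintype M] [Nonempty M]
    [MeasurableSpace M] [MeasurableSingletonClass M]
    {Ω : Type*} [MeasurableSpace Ω] (P : Measure Ω) [IsProbabilityMeasure P]
    (φ : ℝ → ℝ → M → Ω → M)
    (hmeas : ∀ s t x, Measurable fun ω => φ s t x ω)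
    (hco : ∀ᵐ ω ∂P, ∀ s u t : ℝ, s ≤ u → u ≤ t → ∀ x, φ s t x ω = φ u t (φ s u x ω) ω)
    (hstat : ∀ s t h : ℝ, s ≤ t →
      Measure.map (fun ω => fun x => φ s t x ω) P
        = Measure.map (fun ω => fun x => φ (s + h) (t + h) x ω) P)
    (hindep : ∀ s t u : ℝ, s ≤ t → t ≤ u →
      IndepFun (fun ω => fun x => φ s t x ω) (fun ω => fun x => φ t u x ω) P)
    (hcoal : ∀ x y : M, ∀ᵐ ω ∂P, ∃ t : ℝ, 0 < t ∧ φ 0 t x ω = φ 0 t y ω)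
    (m : Measure M) [IsProbabilityMeasure m]
    (hconv : ∀ (x : M) (A : Set M),
      Tendsto (fun t : ℝ => Measure.map (fun ω => φ 0 t x ω) P A) atTop (nhds (m A))) :
    P {ω | ∃ t : ℝ, 0 < t ∧ ∀ x y : M, φ (-t) 0 x ω = φ (-t) 0 y ω} = 1 ∧
    ∃ X : Ω → M, Measurable X ∧
      (∀ᵐ ω ∂P, ∀ x : M, ∀ᶠ t in (atTop : Filter ℝ), φ (-t) 0 x ω = X ω) ∧
      Measure.map X P = m := by
  classical
  haveI : MeasurableSingletonClass (M → M) := by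
    constructor
    intro f
    have hset : ({f} : Set (M → M)) = ⋂ x, Function.eval x ⁻¹' {f x} := by
      ext g
      simp [Function.eval, funext_iff]
    rw [hset]
    exact MeasurableSet.iInter fun x => measurable_pi_apply x (measurableSet_singleton _)
  set x₀ : M := Classical.arbitrary M with hx₀
  set S : Set (M → M) := {f | ∀ x y : M, f x = f y} with hSdef
  have hSm : MeasurableSet S := .of_discrete
  have hFm : ∀ s t : ℝ, Measurable (fun ω => fun x => φ s t x ω) :=
    fun s t => measurable_pi_lambda _ fun x => hmeas s t x
  set A : ℕ → Set Ω := fun n => (fun ω => fun x => φ 0 ((n : ℝ) + 1) x ω) ⁻¹' S with hAdef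
  set D : ℕ → Set Ω := fun n => (fun ω => fun x => φ (-((n : ℝ) + 1)) 0 x ω) ⁻¹' S with hDdef
  have hAm : ∀ n, MeasurableSet (A n) := fun n => (hFm _ _) hSm
  have hDm : ∀ n, MeasurableSet (D n) := fun n => (hFm _ _) hSm
  have hAmem : ∀ n ω, ω ∈ A n ↔ ∀ x y : M, φ 0 ((n : ℝ) + 1) x ω = φ 0 ((n : ℝ) + 1) y ω :=
    fun n ω => Iff.rfl
  have hDmem : ∀ n ω, ω ∈ D n ↔ ∀ x y : M, φ (-((n : ℝ) + 1)) 0 x ω = φ (-((n : ℝ) + 1)) 0 y ω :=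
    fun n ω => Iff.rfl
  -- law equality between forward and backward events
  have hlaw : ∀ n : ℕ, P (A n) = P (D n) := by
    intro n
    have h1 := hstat 0 ((n : ℝ) + 1) (-((n : ℝ) + 1)) (by positivity)
    have h2 : (fun ω => fun x => φ (0 + -((n : ℝ) + 1)) (((n : ℝ) + 1) + -((n : ℝ) + 1)) x ω)
        = (fun ω => fun x => φ (-((n : ℝ) + 1)) 0 x ω) := by
      simp only [zero_add, add_neg_cancel]
    rw [h2] at h1
    have h3 := congrArg (fun μ : Measure (M → M) => μ S) h1
    rwa [Measure.map_apply (hFm _ _) hSm, Measure.map_apply (hFm _ _) hSm] at h3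
  -- a.s. forward coalescence at some integer time
  have hae_exists : ∀ᵐ ω ∂P, ∃ n : ℕ, ω ∈ A n := by
    have hpair : ∀ᵐ ω ∂P, ∀ p : M × M, ∃ t : ℝ, 0 < t ∧ φ 0 t p.1 ω = φ 0 t p.2 ω :=
      ae_all_iff.2 fun p => hcoal p.1 p.2
    filter_upwards [hco, hpair] with ω hc hp
    choose f hf0 hfe using hp
    refine ⟨Finset.univ.sup fun p : M × M => ⌈f p⌉₊, ?_⟩
    set n := Finset.univ.sup fun p : M × M => ⌈f p⌉₊ with hn
    intro x y
    have hle : f (x, y) ≤ (n : ℝ) + 1 := by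
      have h1 : f (x, y) ≤ (⌈f (x, y)⌉₊ : ℝ) := Nat.le_ceil _
      have h2 : (⌈f (x, y)⌉₊ : ℝ) ≤ (n : ℝ) :=
        Nat.cast_le.2 (Finset.le_sup (f := fun p : M × M => ⌈f p⌉₊) (Finset.mem_univ (x, y)))
      linarith
    have hx := hc 0 (f (x, y)) ((n : ℝ) + 1) (le_of_lt (hf0 (x, y))) hle x
    have hy := hc 0 (f (x, y)) ((n : ℝ) + 1) (le_of_lt (hf0 (x, y))) hle y
    show φ 0 ((n : ℝ) + 1) x ω = φ 0 ((n : ℝ) + 1) y ω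
    rw [hx, hy, hfe (x, y)]
  -- a.s. monotonicity of forward events
  have hmono : ∀ᵐ ω ∂P, ∀ n k : ℕ, n ≤ k → ω ∈ A n → ω ∈ A k := by
    filter_upwards [hco] with ω hc n k hnk hA' x y
    have h1 : (0 : ℝ) ≤ (n : ℝ) + 1 := by positivity
    have h2 : ((n : ℝ) + 1) ≤ (k : ℝ) + 1 := by
      have : (n : ℝ) ≤ (k : ℝ) := Nat.cast_le.2 hnk
      linarith
    have hA'' : ∀ x y : M, φ 0 ((n : ℝ) + 1) x ω = φ 0 ((n : ℝ) + 1) y ω := hA'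
    show φ 0 ((k : ℝ) + 1) x ω = φ 0 ((k : ℝ) + 1) y ω
    rw [hc 0 _ _ h1 h2 x, hc 0 _ _ h1 h2 y, hA'' x y]
  have hUnion1 : P (⋃ n, A n) = 1 := by
    refine le_antisymm prob_le_one ?_
    have hsub : ∀ᵐ ω ∂P, ω ∈ ⋃ n, A n := hae_exists.mono fun ω h => Set.mem_iUnion.2 h
    have h0 : P (⋃ n, A n)ᶜ = 0 := by
      have hh := ae_iff.1 hsub
      simpa [Set.compl_def] using hh
    have hcompl := measure_compl (MeasurableSet.iUnion hAm) (measure_ne_top P _)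
    rw [h0, measure_univ] at hcompl
    exact tsub_eq_zero_iff_le.1 hcompl.symm
  -- tendsto of partial unions
  have hAcc : Tendsto (fun n => P (Set.accumulate A n)) atTop (𝓝 1) := by
    have := tendsto_measure_iUnion_accumulate (μ := P) (f := A)
    rwa [hUnion1] at this
  have hAccLe : ∀ n, P (Set.accumulate A n) ≤ P (A n) := by
    intro n
    have hsub : Set.accumulate A n ⊆ A n ∪ {ω | ¬ ∀ n k : ℕ, n ≤ k → ω ∈ A n → ω ∈ A k} := by
      intro ω hω
      by_cases hgood : ∀ n k : ℕ, n ≤ k → ω ∈ A n → ω ∈ A k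
      · rcases Set.mem_iUnion₂.1 hω with ⟨k, hk, hωk⟩
        exact Or.inl (hgood k n hk hωk)
      · exact Or.inr hgood
    calc P (Set.accumulate A n)
        ≤ P (A n ∪ {ω | ¬ ∀ n k : ℕ, n ≤ k → ω ∈ A n → ω ∈ A k}) := measure_mono hsub
      _ ≤ P (A n) + P {ω | ¬ ∀ n k : ℕ, n ≤ k → ω ∈ A n → ω ∈ A k} := measure_union_le _ _
      _ = P (A n) := by rw [ae_iff.1 hmono, add_zero]
  have hAten : Tendsto (fun n => P (A n)) atTop (𝓝 1) :=
    tendsto_of_tendsto_of_tendsto_of_le_of_le hAcc tendsto_const_nhds hAccLe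
      fun n => prob_le_one
  have hDten : Tendsto (fun n => P (D n)) atTop (𝓝 1) := hAten.congr hlaw
  have hDU : P (⋃ n, D n) = 1 := by
    refine le_antisymm prob_le_one ?_
    exact le_of_tendsto hDten
      (Eventually.of_forall fun n => measure_mono (Set.subset_iUnion D n))
  -- first conjunct
  have hgoal1 : P {ω | ∃ t : ℝ, 0 < t ∧ ∀ x y : M, φ (-t) 0 x ω = φ (-t) 0 y ω} = 1 := by
    refine le_antisymm prob_le_one ?_
    rw [← hDU]
    refine measure_mono ?_
    intro ω hω
    rcases Set.mem_iUnion.1 hω with ⟨n, hn⟩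
    exact ⟨(n : ℝ) + 1, by positivity, hn⟩
  -- the backward coalescence index and value
  set N : Ω → ℕ := fun ω => sInf {n | ω ∈ D n} with hNdef
  have hNm : Measurable N := by
    apply measurable_to_countable'
    intro n
    match n with
    | 0 =>
      have hset : N ⁻¹' {0} = D 0 ∪ ⋂ k, (D k)ᶜ := by
        ext ω
        simp only [Set.mem_preimage, Set.mem_singleton_iff, hNdef, Set.mem_union,
          Set.mem_iInter, Set.mem_compl_iff]
        rw [Nat.sInf_eq_zero]
        constructor
        · rintro (h0 | he)
          · exact Or.inl h0
          · exact Or.inr fun k hk => (Set.eq_empty_iff_forall_notMem.1 he) k hk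
        · rintro (h0 | he)
          · exact Or.inl h0
          · exact Or.inr (Set.eq_empty_iff_forall_notMem.2 he)
      rw [hset]
      exact (hDm 0).union (MeasurableSet.iInter fun k => (hDm k).compl)
    | Nat.succ mm =>
      have hset : N ⁻¹' {mm + 1} = D (mm + 1) ∩ ⋂ k, ⋂ (_ : k ≤ mm), (D k)ᶜ := by
        ext ω
        simp only [Set.mem_preimage, Set.mem_singleton_iff, hNdef, Set.mem_inter_iff,
          Set.mem_iInter, Set.mem_compl_iff]
        constructor
        · intro h
          have hne : {n | ω ∈ D n}.Nonempty := by
            by_contra hne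
            rw [Set.not_nonempty_iff_eq_empty.1 hne, Nat.sInf_empty] at h
            omega
          have hmem := Nat.sInf_mem hne
          rw [h] at hmem
          refine ⟨hmem, fun k hk hkmem => ?_⟩
          have := Nat.sInf_le (show k ∈ {n | ω ∈ D n} from hkmem)
          omega
        · rintro ⟨h1, h2⟩
          have hle : sInf {n | ω ∈ D n} ≤ mm + 1 := Nat.sInf_le h1
          have hge : ¬ sInf {n | ω ∈ D n} ≤ mm := by
            intro hc
            have hmem := Nat.sInf_mem (⟨mm + 1, h1⟩ : {n | ω ∈ D n}.Nonempty)
            exact h2 _ hc hmem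
          omega
      rw [hset]
      exact (hDm _).inter
        (MeasurableSet.iInter fun k => MeasurableSet.iInter fun _ => (hDm k).compl)
  set X : Ω → M := fun ω => φ (-((N ω : ℝ) + 1)) 0 x₀ ω with hXdef
  have hXm : Measurable X := by
    apply measurable_to_countable'
    intro a
    have hset : X ⁻¹' {a}
        = ⋃ n, N ⁻¹' {n} ∩ (fun ω => φ (-((n : ℝ) + 1)) 0 x₀ ω) ⁻¹' {a} := by
      ext ω
      simp only [Set.mem_preimage, Set.mem_singleton_iff, Set.mem_iUnion, Set.mem_inter_iff,
        hXdef]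
      constructor
      · intro h
        exact ⟨N ω, rfl, h⟩
      · rintro ⟨n, h1, h2⟩
        rw [h1]
        exact h2
    rw [hset]
    exact MeasurableSet.iUnion fun n =>
      (hNm (measurableSet_singleton n)).inter (hmeas _ _ _ (measurableSet_singleton a))
  have hDUae : ∀ᵐ ω ∂P, ω ∈ ⋃ n, D n := by
    rw [ae_iff]
    have hcompl := measure_compl (MeasurableSet.iUnion hDm) (measure_ne_top P _)
    rw [hDU, measure_univ, tsub_self] at hcompl
    simpa [Set.compl_def] using hcompl
  -- key a.s. property: everything coalesces to X from time N+1 backwards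
  have hkey : ∀ᵐ ω ∂P, ∀ x : M, ∀ t : ℝ, ((N ω : ℝ) + 1) ≤ t → φ (-t) 0 x ω = X ω := by
    filter_upwards [hco, hDUae] with ω hc hu x t ht
    have hne : {n | ω ∈ D n}.Nonempty := by
      rcases Set.mem_iUnion.1 hu with ⟨n, hn⟩
      exact ⟨n, hn⟩
    have hNmem : ω ∈ D (N ω) := Nat.sInf_mem hne
    have h1 : -t ≤ -((N ω : ℝ) + 1) := neg_le_neg ht
    have h2 : -((N ω : ℝ) + 1) ≤ 0 := by
      have : (0 : ℝ) ≤ (N ω : ℝ) + 1 := by positivity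
      linarith
    rw [hc (-t) (-((N ω : ℝ) + 1)) 0 h1 h2 x]
    exact hNmem (φ (-t) (-((N ω : ℝ) + 1)) x ω) x₀
  have hev : ∀ᵐ ω ∂P, ∀ x : M, ∀ᶠ t in (atTop : Filter ℝ), φ (-t) 0 x ω = X ω :=
    hkey.mono fun ω h x => eventually_atTop.2 ⟨(N ω : ℝ) + 1, fun t ht => h x t ht⟩
  -- coordinate law equality
  have hcoord : ∀ n : ℕ, Measure.map (fun ω => φ (-((n : ℝ) + 1)) 0 x₀ ω) P
      = Measure.map (fun ω => φ 0 ((n : ℝ) + 1) x₀ ω) P := by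
    intro n
    have h1 := hstat 0 ((n : ℝ) + 1) (-((n : ℝ) + 1)) (by positivity)
    have h2 : (fun ω => fun x => φ (0 + -((n : ℝ) + 1)) (((n : ℝ) + 1) + -((n : ℝ) + 1)) x ω)
        = (fun ω => fun x => φ (-((n : ℝ) + 1)) 0 x ω) := by
      simp only [zero_add, add_neg_cancel]
    rw [h2] at h1
    calc Measure.map (fun ω => φ (-((n : ℝ) + 1)) 0 x₀ ω) P
        = Measure.map (Function.eval x₀)
            (Measure.map (fun ω => fun x => φ (-((n : ℝ) + 1)) 0 x ω) P) := by
          rw [Measure.map_map (measurable_pi_apply x₀) (hFm _ _)]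
          rfl
      _ = Measure.map (Function.eval x₀)
            (Measure.map (fun ω => fun x => φ 0 ((n : ℝ) + 1) x ω) P) := by rw [h1]
      _ = Measure.map (fun ω => φ 0 ((n : ℝ) + 1) x₀ ω) P := by
          rw [Measure.map_map (measurable_pi_apply x₀) (hFm _ _)]
          rfl
  -- the "different from X" events shrink to probability 0
  set En : ℕ → Set Ω := fun n => {ω | φ (-((n : ℝ) + 1)) 0 x₀ ω ≠ X ω} with hEndef
  have hEsub : ∀ n, En n ⊆ N ⁻¹' (Set.Ioi n)
      ∪ {ω | ¬ ∀ x : M, ∀ t : ℝ, ((N ω : ℝ) + 1) ≤ t → φ (-t) 0 x ω = X ω} := by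
    intro n ω hω
    by_cases hg : ∀ x : M, ∀ t : ℝ, ((N ω : ℝ) + 1) ≤ t → φ (-t) 0 x ω = X ω
    · left
      simp only [Set.mem_preimage, Set.mem_Ioi]
      by_contra hn
      have hNle : N ω ≤ n := by omega
      exact hω (hg x₀ ((n : ℝ) + 1) (by
        have : (N ω : ℝ) ≤ (n : ℝ) := Nat.cast_le.2 hNle
        linarith))
    · exact Or.inr hg
  have hEle : ∀ n, P (En n) ≤ P (N ⁻¹' (Set.Ioi n)) := by
    intro n
    calc P (En n) ≤ P (N ⁻¹' (Set.Ioi n)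
          ∪ {ω | ¬ ∀ x : M, ∀ t : ℝ, ((N ω : ℝ) + 1) ≤ t → φ (-t) 0 x ω = X ω}) :=
        measure_mono (hEsub n)
      _ ≤ P (N ⁻¹' (Set.Ioi n))
          + P {ω | ¬ ∀ x : M, ∀ t : ℝ, ((N ω : ℝ) + 1) ≤ t → φ (-t) 0 x ω = X ω} :=
        measure_union_le _ _
      _ = P (N ⁻¹' (Set.Ioi n)) := by rw [ae_iff.1 hkey, add_zero]
  have hNtail : Tendsto (fun n => P (N ⁻¹' (Set.Ioi n))) atTop (𝓝 0) := by
    have hanti : Antitone fun n : ℕ => N ⁻¹' (Set.Ioi n) := fun a b hab =>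
      Set.preimage_mono (Set.Ioi_subset_Ioi hab)
    have hint : ⋂ n, N ⁻¹' (Set.Ioi n) = (∅ : Set Ω) := by
      ext ω
      simp only [Set.mem_iInter, Set.mem_preimage, Set.mem_Ioi, Set.mem_empty_iff_false,
        iff_false, not_forall]
      exact ⟨N ω, lt_irrefl _⟩
    have := tendsto_measure_iInter_atTop (μ := P)
      (fun n => (hNm measurableSet_Ioi).nullMeasurableSet) hanti ⟨0, measure_ne_top P _⟩
    rw [hint, measure_empty] at this
    exact this
  have hEten : Tendsto (fun n => P (En n)) atTop (𝓝 0) :=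
    tendsto_of_tendsto_of_tendsto_of_le_of_le tendsto_const_nhds hNtail
      (fun n => zero_le) hEle
  have hEnm : ∀ n, MeasurableSet (En n) := by
    intro n
    have hset : En n = (fun ω => (φ (-((n : ℝ) + 1)) 0 x₀ ω, X ω)) ⁻¹' {p : M × M | p.1 ≠ p.2} :=
      rfl
    rw [hset]
    exact (Measurable.prodMk (hmeas _ _ _) hXm) .of_discrete
  -- identification of the law of X
  have hmap : Measure.map X P = m := by
    refine Measure.ext fun s hs => ?_
    have hq : ∀ n : ℕ, (Measure.map (fun ω => φ 0 ((n : ℝ) + 1) x₀ ω) P) s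
        = P ((fun ω => φ (-((n : ℝ) + 1)) 0 x₀ ω) ⁻¹' s) := by
      intro n
      rw [← hcoord n, Measure.map_apply (hmeas _ _ _) hs]
    have hup : ∀ n : ℕ, P ((fun ω => φ (-((n : ℝ) + 1)) 0 x₀ ω) ⁻¹' s) ≤ P (X ⁻¹' s) + P (En n) := by
      intro n
      refine (measure_mono ?_).trans (measure_union_le _ _)
      intro ω hω
      by_cases h : φ (-((n : ℝ) + 1)) 0 x₀ ω = X ω
      · left
        rw [Set.mem_preimage] at hω ⊢
        rwa [← h]
      · exact Or.inr h
    have hdown : ∀ n : ℕ, P (X ⁻¹' s) ≤ P ((fun ω => φ (-((n : ℝ) + 1)) 0 x₀ ω) ⁻¹' s) + P (En n) := by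
      intro n
      refine (measure_mono ?_).trans (measure_union_le _ _)
      intro ω hω
      by_cases h : φ (-((n : ℝ) + 1)) 0 x₀ ω = X ω
      · left
        rw [Set.mem_preimage] at hω ⊢
        rwa [h]
      · exact Or.inr h
    have hlower : Tendsto (fun n => P (X ⁻¹' s) - P (En n)) atTop (𝓝 (P (X ⁻¹' s))) := by
      have := ENNReal.Tendsto.sub (tendsto_const_nhds (x := P (X ⁻¹' s))) hEten
        (Or.inl (measure_ne_top P _))
      simpa using this
    have hupper : Tendsto (fun n => P (X ⁻¹' s) + P (En n)) atTop (𝓝 (P (X ⁻¹' s))) := by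
      have := Filter.Tendsto.add (tendsto_const_nhds (x := P (X ⁻¹' s))) hEten
      simpa using this
    have hlimP : Tendsto (fun n : ℕ => P ((fun ω => φ (-((n : ℝ) + 1)) 0 x₀ ω) ⁻¹' s)) atTop
        (𝓝 (P (X ⁻¹' s))) :=
      tendsto_of_tendsto_of_tendsto_of_le_of_le hlower hupper
        (fun n => tsub_le_iff_right.2 (hdown n)) hup
    have hnat : Tendsto (fun n : ℕ => (n : ℝ) + 1) atTop atTop :=
      tendsto_atTop_add_const_right _ 1 tendsto_natCast_atTop_atTop
    have hlimm : Tendsto (fun n : ℕ => (Measure.map (fun ω => φ 0 ((n : ℝ) + 1) x₀ ω) P) s)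
        atTop (𝓝 (m s)) := (hconv x₀ s).comp hnat
    have hlimm' : Tendsto (fun n : ℕ => P ((fun ω => φ (-((n : ℝ) + 1)) 0 x₀ ω) ⁻¹' s)) atTop
        (𝓝 (m s)) := hlimm.congr hq
    have := tendsto_nhds_unique hlimP hlimm'
    rw [Measure.map_apply hXm hs]
    exact this
  exact ⟨hgoal1, X, hXm, hev, hmap⟩
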